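/- In ℝⁿ with the setup below, let μ₁,…,μₙ be real numbers, μ = Σⱼ μⱼ·εⱼ, and δₖ = Σᵢ(n−i)εᵢ. Set P := ∏_{α ∈ Δ⁺} B(μ + δₖ, α) and Pₖ := ∏_{α ∈ Δ⁺ₗ} B(δₖ, α). Then P/Pₖ = (1/(2(2n−1)))ⁿ · ∏_{i=1}^{n}(μᵢ + n − i) · ∏_{1 ≤ i < j ≤ n} [(μᵢ + μⱼ + 2n − i − j)(μᵢ − μⱼ − i + j)] / [(2n − i − j)(j − i)]. (This ratio is the combinatorial factor in the Barbasch–Moscovici L²-index formula Index 𝔇_{μ,Γ} = Vol(Γ\G)·P/Pₖ for the twisted Dirac operator on Γ\SO₁(2n,1)/SO(2n).) -/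

import Mathlib

open scoped BigOperators

noncomputable section

/-- The standard basis vector `εᵢ` of `ℝⁿ` (here `i : Fin n` corresponds to the
1-based index `i+1`). -/
def eps (n : ℕ) (i : Fin n) : Fin n → ℝ := Pi.single i 1

/-- The bilinear form `B(x,y) = (∑ᵢ xᵢ yᵢ) / (2(2n−1))`. -/
def B (n : ℕ) (x y : Fin n → ℝ) : ℝ := (∑ i, x i * y i) / (2 * (2 * (n : ℝ) - 1))

/-- The set of pairs `(i,j)` with `i < j`. -/
def pairs (n : ℕ) : Finset (Fin n × Fin n) := Finset.univ.filter (fun p => p.1 < p.2)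

/-- The noncompact positive roots `Δ⁺ₙ = {εᵢ : 1 ≤ i ≤ n}`. -/
def PosNC (n : ℕ) : Finset (Fin n → ℝ) := Finset.univ.image (eps n)

/-- The compact positive roots `Δ⁺ₗ = {εᵢ − εⱼ, εᵢ + εⱼ : 1 ≤ i < j ≤ n}`. -/
def PosC (n : ℕ) : Finset (Fin n → ℝ) :=
  (pairs n).image (fun p => eps n p.1 - eps n p.2) ∪
  (pairs n).image (fun p => eps n p.1 + eps n p.2)

/-- All positive roots `Δ⁺ = Δ⁺ₙ ∪ Δ⁺ₗ`. -/
def Pos (n : ℕ) : Finset (Fin n → ℝ) := PosNC n ∪ PosC n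

/-- `δₖ = Σᵢ (n − i) εᵢ` (1-based `i`). -/
def deltaK (n : ℕ) : Fin n → ℝ := ∑ i : Fin n, ((n : ℝ) - ((i.val : ℝ) + 1)) • eps n i

/-- `δₙ = (1/2) Σᵢ εᵢ`. -/
def deltaN (n : ℕ) : Fin n → ℝ := ∑ i, (1 / 2 : ℝ) • eps n i

/-- The vector `μ = Σⱼ μⱼ εⱼ` associated with coefficients `μ : Fin n → ℝ`. -/
def vec (n : ℕ) (μ : Fin n → ℝ) : Fin n → ℝ := ∑ j, μ j • eps n j

lemma eps_apply (n : ℕ) (i j : Fin n) : eps n i j = if j = i then 1 else 0 := by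
  simp [eps, Pi.single_apply]

lemma sum_eps (n : ℕ) (i : Fin n) : ∑ k, eps n i k = 1 := by
  simp [eps_apply]

lemma eps_inj (n : ℕ) : Function.Injective (eps n) := by
  intro i j h
  by_contra hne
  have := congrFun h i
  rw [eps_apply, eps_apply, if_pos rfl, if_neg hne] at this; exact one_ne_zero this

lemma vec_apply (n : ℕ) (μ : Fin n → ℝ) (i : Fin n) : vec n μ i = μ i := by
  simp [vec, Finset.sum_apply, eps_apply]

lemma deltaK_apply (n : ℕ) (i : Fin n) : deltaK n i = (n : ℝ) - ((i.val : ℝ) + 1) := by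
  simp [deltaK, Finset.sum_apply, eps_apply]

lemma B_eps (n : ℕ) (x : Fin n → ℝ) (i : Fin n) :
    B n x (eps n i) = x i / (2 * (2 * (n : ℝ) - 1)) := by
  simp [B, eps_apply, mul_ite]

lemma B_sub (n : ℕ) (x : Fin n → ℝ) (i j : Fin n) (h : i ≠ j) :
    B n x (eps n i - eps n j) = (x i - x j) / (2 * (2 * (n : ℝ) - 1)) := by
  simp [B, eps_apply, Pi.sub_apply, mul_sub, mul_ite, Finset.sum_sub_distrib]

lemma B_add (n : ℕ) (x : Fin n → ℝ) (i j : Fin n) (h : i ≠ j) :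
    B n x (eps n i + eps n j) = (x i + x j) / (2 * (2 * (n : ℝ) - 1)) := by
  simp [B, eps_apply, Pi.add_apply, mul_add, mul_ite, Finset.sum_add_distrib]

lemma mem_pairs {n : ℕ} {p : Fin n × Fin n} : p ∈ pairs n ↔ p.1 < p.2 := by
  simp [pairs]

lemma sum_sub (n : ℕ) (i j : Fin n) (h : i ≠ j) :
    ∑ k, (eps n i - eps n j) k = 0 := by
  simp [Pi.sub_apply, eps_apply, Finset.sum_sub_distrib]

lemma sum_add (n : ℕ) (i j : Fin n) (h : i ≠ j) :
    ∑ k, (eps n i + eps n j) k = 2 := by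
  simp [Pi.add_apply, eps_apply, Finset.sum_add_distrib]
  norm_num

lemma sub_injOn (n : ℕ) : ∀ p ∈ pairs n, ∀ q ∈ pairs n,
    eps n p.1 - eps n p.2 = eps n q.1 - eps n q.2 → p = q := by
  rintro ⟨i, j⟩ hp ⟨k, l⟩ hq h
  rw [mem_pairs] at hp hq
  have hij : i ≠ j := ne_of_lt hp
  have hkl : k ≠ l := ne_of_lt hq
  have h1 := congrFun h i
  have h2 := congrFun h j
  simp only [Pi.sub_apply, eps_apply] at h1 h2
  simp only [Prod.mk.injEq]
  split_ifs at h1 h2 <;> simp_all <;>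
    first
      | exact absurd hq (not_lt.2 hp.le)
      | norm_num at *

lemma add_injOn (n : ℕ) : ∀ p ∈ pairs n, ∀ q ∈ pairs n,
    eps n p.1 + eps n p.2 = eps n q.1 + eps n q.2 → p = q := by
  rintro ⟨i, j⟩ hp ⟨k, l⟩ hq h
  rw [mem_pairs] at hp hq
  have hij : i ≠ j := ne_of_lt hp
  have hkl : k ≠ l := ne_of_lt hq
  have h1 := congrFun h i
  have h2 := congrFun h j
  simp only [Pi.add_apply, eps_apply] at h1 h2
  simp only [Prod.mk.injEq]
  split_ifs at h1 h2 <;> simp_all <;>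
    first
      | exact absurd hq (not_lt.2 hp.le)
      | norm_num at *

lemma disj_sub_add (n : ℕ) :
    Disjoint ((pairs n).image (fun p => eps n p.1 - eps n p.2))
      ((pairs n).image (fun p => eps n p.1 + eps n p.2)) := by
  rw [Finset.disjoint_left]
  rintro x hx hy
  obtain ⟨p, hp, rfl⟩ := Finset.mem_image.1 hx
  obtain ⟨q, hq, hxy⟩ := Finset.mem_image.1 hy
  have h0 := sum_sub n p.1 p.2 (ne_of_lt (mem_pairs.1 hp))
  have h2 := sum_add n q.1 q.2 (ne_of_lt (mem_pairs.1 hq))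
  rw [hxy] at h2
  rw [h2] at h0
  norm_num at h0

lemma disj_nc_c (n : ℕ) : Disjoint (PosNC n) (PosC n) := by
  rw [Finset.disjoint_left]
  rintro x hx hy
  obtain ⟨i, _, rfl⟩ := Finset.mem_image.1 hx
  have h1 : ∑ k, eps n i k = 1 := sum_eps n i
  rcases Finset.mem_union.1 hy with hy | hy
  · obtain ⟨p, hp, hxy⟩ := Finset.mem_image.1 hy
    have h0 := sum_sub n p.1 p.2 (ne_of_lt (mem_pairs.1 hp))
    rw [hxy] at h0
    rw [h0] at h1
    norm_num at h1
  · obtain ⟨p, hp, hxy⟩ := Finset.mem_image.1 hy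
    have h0 := sum_add n p.1 p.2 (ne_of_lt (mem_pairs.1 hp))
    rw [hxy] at h0
    rw [h0] at h1
    norm_num at h1

lemma alg (c Pv Ps Pa Qs Qa : ℝ) (n m : ℕ) (hc : c ≠ 0) (hQs : Qs ≠ 0) (hQa : Qa ≠ 0) :
    (Pv / c ^ n) * (Ps / c ^ m * (Pa / c ^ m)) / (Qs / c ^ m * (Qa / c ^ m))
      = (1 / c) ^ n * Pv * (Pa * Ps / (Qa * Qs)) := by
  have hcm : c ^ m ≠ 0 := pow_ne_zero _ hc
  have hcn : c ^ n ≠ 0 := pow_ne_zero _ hc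
  rw [div_pow, one_pow]
  field_simp

set_option maxHeartbeats 1000000 in
/-- the ratio `P/Pₖ` appearing in the Barbasch–Moscovici `L²`-index
formula for the twisted Dirac operator on `Γ\SO₁(2n,1)/SO(2n)` satisfies
`P/Pₖ = (1/(2(2n−1)))ⁿ · ∏ᵢ(μᵢ+n−i) ·
∏_{i<j} [(μᵢ+μⱼ+2n−i−j)(μᵢ−μⱼ−i+j)] / [(2n−i−j)(j−i)]`. -/
theorem index_ratio_P_div_Pk (n : ℕ) (hn : 2 ≤ n) (μ : Fin n → ℝ) :
    (∏ α ∈ Pos n, B n (vec n μ + deltaK n) α) / (∏ α ∈ PosC n, B n (deltaK n) α)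
      = (1 / (2 * (2 * (n : ℝ) - 1))) ^ n *
        (∏ i : Fin n, (μ i + (n : ℝ) - ((i.val : ℝ) + 1))) *
        ∏ p ∈ pairs n,
          ((μ p.1 + μ p.2 + 2 * (n : ℝ) - ((p.1.val : ℝ) + 1) - ((p.2.val : ℝ) + 1)) *
            (μ p.1 - μ p.2 - ((p.1.val : ℝ) + 1) + ((p.2.val : ℝ) + 1))) /
          ((2 * (n : ℝ) - ((p.1.val : ℝ) + 1) - ((p.2.val : ℝ) + 1)) *
            (((p.2.val : ℝ) + 1) - ((p.1.val : ℝ) + 1))) := by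
  set c : ℝ := 2 * (2 * (n : ℝ) - 1) with hc_def
  have hc : c ≠ 0 := by
    have : (2 : ℝ) ≤ (n : ℝ) := by exact_mod_cast hn
    rw [hc_def]; nlinarith
  set x : Fin n → ℝ := vec n μ + deltaK n with hx_def
  have hx : ∀ i, x i = μ i + (n : ℝ) - ((i.val : ℝ) + 1) := by
    intro i
    simp [hx_def, Pi.add_apply, vec_apply, deltaK_apply]
    ring
  -- split products
  have hsplit : (∏ α ∈ Pos n, B n x α)
      = (∏ i : Fin n, B n x (eps n i)) *
        ((∏ p ∈ pairs n, B n x (eps n p.1 - eps n p.2)) *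
          (∏ p ∈ pairs n, B n x (eps n p.1 + eps n p.2))) := by
    rw [Pos, Finset.prod_union (disj_nc_c n), PosNC,
      Finset.prod_image (fun a _ b _ h => eps_inj n h), PosC,
      Finset.prod_union (disj_sub_add n),
      Finset.prod_image (sub_injOn n), Finset.prod_image (add_injOn n)]
  have hsplitC : (∏ α ∈ PosC n, B n (deltaK n) α)
      = (∏ p ∈ pairs n, B n (deltaK n) (eps n p.1 - eps n p.2)) *
        (∏ p ∈ pairs n, B n (deltaK n) (eps n p.1 + eps n p.2)) := by
    rw [PosC, Finset.prod_union (disj_sub_add n),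
      Finset.prod_image (sub_injOn n), Finset.prod_image (add_injOn n)]
  rw [hsplit, hsplitC]
  -- rewrite each factor
  have e1 : (∏ i : Fin n, B n x (eps n i))
      = (∏ i : Fin n, (μ i + (n : ℝ) - ((i.val : ℝ) + 1))) / c ^ n := by
    rw [show (∏ i : Fin n, B n x (eps n i))
        = ∏ i : Fin n, (μ i + (n : ℝ) - ((i.val : ℝ) + 1)) / c from
      Finset.prod_congr rfl fun i _ => by rw [B_eps, hx i]]
    rw [Finset.prod_div_distrib, Finset.prod_const, Finset.card_univ, Fintype.card_fin]
  have key : ∀ (y : Fin n → ℝ) (f : Fin n × Fin n → ℝ)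
      (hf : ∀ p ∈ pairs n, y p.1 - y p.2 = f p),
      (∏ p ∈ pairs n, B n y (eps n p.1 - eps n p.2))
        = (∏ p ∈ pairs n, f p) / c ^ (pairs n).card := by
    intro y f hf
    rw [show (∏ p ∈ pairs n, B n y (eps n p.1 - eps n p.2))
        = ∏ p ∈ pairs n, f p / c from
      Finset.prod_congr rfl fun p hp => by
        rw [B_sub n y p.1 p.2 (ne_of_lt (mem_pairs.1 hp)), hf p hp]]
    rw [Finset.prod_div_distrib, Finset.prod_const]
  have keya : ∀ (y : Fin n → ℝ) (f : Fin n × Fin n → ℝ)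
      (hf : ∀ p ∈ pairs n, y p.1 + y p.2 = f p),
      (∏ p ∈ pairs n, B n y (eps n p.1 + eps n p.2))
        = (∏ p ∈ pairs n, f p) / c ^ (pairs n).card := by
    intro y f hf
    rw [show (∏ p ∈ pairs n, B n y (eps n p.1 + eps n p.2))
        = ∏ p ∈ pairs n, f p / c from
      Finset.prod_congr rfl fun p hp => by
        rw [B_add n y p.1 p.2 (ne_of_lt (mem_pairs.1 hp)), hf p hp]]
    rw [Finset.prod_div_distrib, Finset.prod_const]
  rw [key x (fun p => μ p.1 - μ p.2 - ((p.1.val : ℝ) + 1) + ((p.2.val : ℝ) + 1))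
      (fun p _ => by rw [hx p.1, hx p.2]; ring),
    keya x (fun p => μ p.1 + μ p.2 + 2 * (n : ℝ) - ((p.1.val : ℝ) + 1) - ((p.2.val : ℝ) + 1))
      (fun p _ => by rw [hx p.1, hx p.2]; ring),
    key (deltaK n) (fun p => ((p.2.val : ℝ) + 1) - ((p.1.val : ℝ) + 1))
      (fun p _ => by rw [deltaK_apply, deltaK_apply]; ring),
    keya (deltaK n) (fun p => 2 * (n : ℝ) - ((p.1.val : ℝ) + 1) - ((p.2.val : ℝ) + 1))
      (fun p _ => by rw [deltaK_apply, deltaK_apply]; ring)]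
  -- nonvanishing of denominators
  have hD : ∀ p ∈ pairs n, (((p.2.val : ℝ) + 1) - ((p.1.val : ℝ) + 1)) ≠ 0 := by
    intro p hp
    have h := mem_pairs.1 hp
    have : (p.1.val : ℝ) < (p.2.val : ℝ) := by exact_mod_cast h
    linarith
  have hC : ∀ p ∈ pairs n, (2 * (n : ℝ) - ((p.1.val : ℝ) + 1) - ((p.2.val : ℝ) + 1)) ≠ 0 := by
    intro p hp
    have h := mem_pairs.1 hp
    have h2 : p.2.val < n := p.2.isLt
    have hlt : p.1.val + 1 + (p.2.val + 1) < 2 * n := by omega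
    have : ((p.1.val : ℝ) + 1) + ((p.2.val : ℝ) + 1) < 2 * (n : ℝ) := by exact_mod_cast hlt
    linarith
  have hPD : (∏ p ∈ pairs n, (((p.2.val : ℝ) + 1) - ((p.1.val : ℝ) + 1))) ≠ 0 :=
    Finset.prod_ne_zero_iff.2 hD
  have hPC : (∏ p ∈ pairs n, (2 * (n : ℝ) - ((p.1.val : ℝ) + 1) - ((p.2.val : ℝ) + 1))) ≠ 0 :=
    Finset.prod_ne_zero_iff.2 hC
  -- RHS product split
  rw [show (∏ p ∈ pairs n,
        ((μ p.1 + μ p.2 + 2 * (n : ℝ) - ((p.1.val : ℝ) + 1) - ((p.2.val : ℝ) + 1)) *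
          (μ p.1 - μ p.2 - ((p.1.val : ℝ) + 1) + ((p.2.val : ℝ) + 1))) /
        ((2 * (n : ℝ) - ((p.1.val : ℝ) + 1) - ((p.2.val : ℝ) + 1)) *
          (((p.2.val : ℝ) + 1) - ((p.1.val : ℝ) + 1))))
      = ((∏ p ∈ pairs n, (μ p.1 + μ p.2 + 2 * (n : ℝ) - ((p.1.val : ℝ) + 1) - ((p.2.val : ℝ) + 1))) *
          (∏ p ∈ pairs n, (μ p.1 - μ p.2 - ((p.1.val : ℝ) + 1) + ((p.2.val : ℝ) + 1)))) /
        ((∏ p ∈ pairs n, (2 * (n : ℝ) - ((p.1.val : ℝ) + 1) - ((p.2.val : ℝ) + 1))) *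
          (∏ p ∈ pairs n, (((p.2.val : ℝ) + 1) - ((p.1.val : ℝ) + 1)))) from by
    rw [← Finset.prod_mul_distrib, ← Finset.prod_mul_distrib, ← Finset.prod_div_distrib]]
  rw [e1]
  exact alg c _ _ _ _ _ n (pairs n).card hc hPD hPC
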